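/- For every real α > 0, with τ_α = 2(α + 1/α) and t_α = 4α + 2/α, and for every real t: Σ_{m∈ℤ} e^{-πτ_α m²} ϑ₂(i π τ_α m, i t_α) e^{2πimt} = ϑ₂(πt, 2iα) · ϑ₂(πt, iτ_α). -/

import Mathlib

set_option maxHeartbeats 1000000

open Complex Real

/-- Summability of exp of a quadratic-in-(n+1/2) with linear term. -/
lemma summable_exp_half (c d : ℝ) (hc : 0 < c) :
    Summable fun n : ℤ => Real.exp (-c * ((n : ℝ) + 1 / 2) ^ 2 + d * ((n : ℝ) + 1 / 2)) := by
  have hT : 0 < c / π := div_pos hc Real.pi_pos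
  have base := summable_pow_mul_jacobiTheta₂_term_bound ((c + |d|) / (2 * π)) hT 0
  refine ((base.mul_left (Real.exp (|d| / 2))).of_nonneg_of_le
    (fun n => (Real.exp_pos _).le) (fun n => ?_))
  rw [pow_zero, one_mul, ← Real.exp_add]
  apply Real.exp_le_exp.2
  have hπ := Real.pi_pos
  have h1 : -π * ((c / π) * (n : ℝ) ^ 2 - 2 * ((c + |d|) / (2 * π)) * |(n : ℤ)|) =
      -c * (n : ℝ) ^ 2 + (c + |d|) * |(n : ℝ)| := by
    push_cast
    field_simp
    ring
  rw [h1]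
  have h2 : -(c : ℝ) * (n : ℝ) ≤ c * |(n : ℝ)| := by
    nlinarith [neg_abs_le (n : ℝ), le_abs_self (n : ℝ)]
  have h3 : d * ((n : ℝ) + 1 / 2) ≤ |d| * |(n : ℝ)| + |d| / 2 := by
    nlinarith [abs_mul d (n : ℝ), le_abs_self (d * (n : ℝ)), le_abs_self d]
  nlinarith

/-- Reindexing equivalence on ℤ × ℤ. -/
def thetaReindex : ℤ × ℤ ≃ ℤ × ℤ :=
  ⟨fun q => (q.1 + q.2 + 1, -q.1 - 1), fun p => (-p.2 - 1, p.1 + p.2),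
    fun q => by cases q; simp only [Prod.mk.injEq]; omega,
    fun p => by cases p; simp only [Prod.mk.injEq]; omega⟩

/-- Jacobi theta function ϑ₂(z, ix) = Σ_{k∈ℤ} e^{-πx(k+1/2)²} e^{2iz(k+1/2)}. -/
noncomputable def theta2 (z : ℂ) (x : ℝ) : ℂ :=
  ∑' k : ℤ, Complex.exp (-Real.pi * x * ((k : ℂ) + 1 / 2) ^ 2) *
    Complex.exp (2 * Complex.I * z * ((k : ℂ) + 1 / 2))

theorem theta2_sum_identity (α : ℝ) (hα : 0 < α) (t : ℝ) :
    ∑' m : ℤ, (Real.exp (-Real.pi * (2 * (α + 1 / α)) * (m : ℝ) ^ 2) : ℂ) *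
        theta2 (Complex.I * Real.pi * (2 * (α + 1 / α)) * (m : ℂ)) (4 * α + 2 / α) *
        Complex.exp (2 * Real.pi * Complex.I * (m : ℂ) * t)
      = theta2 (Real.pi * t) (2 * α) * theta2 (Real.pi * t) (2 * (α + 1 / α)) := by
  have hα' : α ≠ 0 := hα.ne'
  have hτ : (0 : ℝ) < 2 * (α + 1 / α) := by positivity
  have hta : (4 * α + 2 / α : ℝ) = 2 * (α + 1 / α) + 2 * α := by field_simp; ring
  have hπ := Real.pi_pos
  -- the two-variable family
  set F : ℤ → ℤ → ℂ := fun m k =>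
    ((Real.exp (-π * (2 * (α + 1 / α)) * ((m : ℝ) + (k : ℝ) + 1 / 2) ^ 2
        - 2 * π * α * ((k : ℝ) + 1 / 2) ^ 2) : ℝ) : ℂ) *
      Complex.exp (2 * π * Complex.I * (m : ℂ) * t) with hF
  -- summability of F over ℤ × ℤ
  have hFsum : Summable (fun p : ℤ × ℤ => F p.1 p.2) := by
    have h1 : Summable fun n : ℤ =>
        Real.exp (-(π * (2 * (α + 1 / α))) * ((n : ℝ) + 1 / 2) ^ 2) := by
      simpa using summable_exp_half (π * (2 * (α + 1 / α))) 0 (by positivity)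
    have h2 : Summable fun n : ℤ => Real.exp (-(2 * π * α) * ((n : ℝ) + 1 / 2) ^ 2) := by
      simpa using summable_exp_half (2 * π * α) 0 (by positivity)
    have hprod : Summable fun q : ℤ × ℤ =>
        Real.exp (-(π * (2 * (α + 1 / α))) * ((q.1 : ℝ) + 1 / 2) ^ 2) *
          Real.exp (-(2 * π * α) * ((q.2 : ℝ) + 1 / 2) ^ 2) :=
      h1.mul_of_nonneg h2 (fun n => (Real.exp_pos _).le) (fun n => (Real.exp_pos _).le)
    have hinj : Function.Injective (fun p : ℤ × ℤ => (p.1 + p.2, p.2)) := by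
      intro p q h
      simp only [Prod.mk.injEq] at h
      obtain ⟨h1, h2⟩ := h
      exact Prod.ext (by omega) h2
    have hcomp := hprod.comp_injective hinj
    refine Summable.of_norm_bounded hcomp (fun p => ?_)
    rw [hF]
    simp only [Function.comp]
    rw [norm_mul, Complex.norm_real, Real.norm_eq_abs,
      Complex.norm_exp]
    have hre : (2 * ↑π * Complex.I * (p.1 : ℂ) * ↑t).re = 0 := by
      simp [Complex.mul_re, Complex.mul_im]
    rw [hre, Real.exp_zero, mul_one, abs_of_pos (Real.exp_pos _), ← Real.exp_add]
    apply Real.exp_le_exp.2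
    push_cast
    exact le_of_eq (by ring)
  -- rows of F sum to LHS terms
  have hrow : ∀ m : ℤ,
      (Real.exp (-Real.pi * (2 * (α + 1 / α)) * (m : ℝ) ^ 2) : ℂ) *
        theta2 (Complex.I * Real.pi * (2 * (α + 1 / α)) * (m : ℂ)) (4 * α + 2 / α) *
        Complex.exp (2 * Real.pi * Complex.I * (m : ℂ) * t) = ∑' k : ℤ, F m k := by
    intro m
    rw [theta2, ← tsum_mul_left, ← tsum_mul_right]
    refine tsum_congr fun k => ?_
    rw [hF]
    simp only
    rw [Complex.ofReal_exp, Complex.ofReal_exp, ← Complex.exp_add, ← Complex.exp_add,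
      ← Complex.exp_add, ← Complex.exp_add]
    congr 1
    rw [hta]
    push_cast
    linear_combination (2 * (π : ℂ) * (2 * ((α : ℂ) + 1 / (α : ℂ))) * (m : ℂ) *
      ((k : ℂ) + 1 / 2)) * Complex.I_sq
  -- the equivalence reindexing
  set e : ℤ × ℤ ≃ ℤ × ℤ := thetaReindex with he
  have hGsum : Summable (fun q : ℤ × ℤ => F (e q).1 (e q).2) :=
    hFsum.comp_injective e.injective
  have hG : ∀ a b : ℤ, F (e (a, b)).1 (e (a, b)).2 =
      (Complex.exp (-(Real.pi : ℂ) * ((2 * α : ℝ) : ℂ) * ((a : ℂ) + 1 / 2) ^ 2) *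
        Complex.exp (2 * Complex.I * ((Real.pi : ℂ) * t) * ((a : ℂ) + 1 / 2))) *
      (Complex.exp (-(Real.pi : ℂ) * ((2 * (α + 1 / α) : ℝ) : ℂ) * ((b : ℂ) + 1 / 2) ^ 2) *
        Complex.exp (2 * Complex.I * ((Real.pi : ℂ) * t) * ((b : ℂ) + 1 / 2))) := by
    intro a b
    show F (a + b + 1) (-a - 1) = _
    rw [hF]
    simp only
    rw [Complex.ofReal_exp, ← Complex.exp_add, ← Complex.exp_add, ← Complex.exp_add,
      ← Complex.exp_add]
    congr 1
    push_cast
    ring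
  calc ∑' m : ℤ, (Real.exp (-Real.pi * (2 * (α + 1 / α)) * (m : ℝ) ^ 2) : ℂ) *
        theta2 (Complex.I * Real.pi * (2 * (α + 1 / α)) * (m : ℂ)) (4 * α + 2 / α) *
        Complex.exp (2 * Real.pi * Complex.I * (m : ℂ) * t)
      = ∑' m : ℤ, ∑' k : ℤ, F m k := tsum_congr hrow
    _ = ∑' p : ℤ × ℤ, F p.1 p.2 :=
        (Summable.tsum_prod' hFsum (fun m => hFsum.prod_factor m)).symm
    _ = ∑' q : ℤ × ℤ, F (e q).1 (e q).2 := (e.tsum_eq (fun p : ℤ × ℤ => F p.1 p.2)).symm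
    _ = ∑' a : ℤ, ∑' b : ℤ, F (e (a, b)).1 (e (a, b)).2 :=
        Summable.tsum_prod' hGsum (fun a => hGsum.prod_factor a)
    _ = ∑' a : ℤ, ∑' b : ℤ,
        (Complex.exp (-(Real.pi : ℂ) * ((2 * α : ℝ) : ℂ) * ((a : ℂ) + 1 / 2) ^ 2) *
          Complex.exp (2 * Complex.I * ((Real.pi : ℂ) * t) * ((a : ℂ) + 1 / 2))) *
        (Complex.exp (-(Real.pi : ℂ) * ((2 * (α + 1 / α) : ℝ) : ℂ) * ((b : ℂ) + 1 / 2) ^ 2) *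
          Complex.exp (2 * Complex.I * ((Real.pi : ℂ) * t) * ((b : ℂ) + 1 / 2))) := by
        exact tsum_congr fun a => tsum_congr fun b => hG a b
    _ = theta2 (Real.pi * t) (2 * α) * theta2 (Real.pi * t) (2 * (α + 1 / α)) := by
        rw [theta2, theta2, ← tsum_mul_right]
        exact tsum_congr fun a => tsum_mul_left
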